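/- Let d be a positive integer and 0 < ε ≤ d. Let X be a real d × d matrix with spectral (ℓ₂ operator) norm ‖X‖₂ ≤ 1, let y ∈ ℝ^d be a unit vector, and let e ∈ ℝ^d satisfy ‖e‖ ≤ ε/d. If (y + e)ᵀ X (y + e) ≥ 0, then yᵀ (X + (3ε/d)·I) y ≥ 0, where I is the d × d identity matrix. -/

import Mathlib

open scoped Matrix.Norms.L2Operator RealInnerProductSpace

/-- **Lattice PSD constraints imply approximate positive semidefiniteness.**
If `‖X‖₂ ≤ 1` (spectral norm), `y` is a unit vector, `‖e‖ ≤ ε/d`, and the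
lattice constraint `(y+e)ᵀ X (y+e) ≥ 0` holds, then
`yᵀ (X + (3ε/d)·I) y ≥ 0`. -/
theorem stmt_16 {d : ℕ} (hd : 0 < d) (ε : ℝ) (hε0 : 0 < ε) (hεd : ε ≤ d)
    (X : Matrix (Fin d) (Fin d) ℝ) (hX : ‖X‖ ≤ 1)
    (y e : EuclideanSpace ℝ (Fin d)) (hy : ‖y‖ = 1) (he : ‖e‖ ≤ ε / d)
    (hlattice : 0 ≤ ⟪y + e, Matrix.toEuclideanLin X (y + e)⟫) :
    0 ≤ ⟪y, Matrix.toEuclideanLin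
        (X + (3 * ε / d) • (1 : Matrix (Fin d) (Fin d) ℝ)) y⟫ := by
  have hd' : (0:ℝ) < d := by exact_mod_cast hd
  have he0 : (0:ℝ) ≤ ε / d := le_of_lt (div_pos hε0 hd')
  have hεd1 : ε / d ≤ 1 := by rw [div_le_one hd']; exact hεd
  set T := Matrix.toEuclideanLin X with hT
  have hbound : ∀ v : EuclideanSpace ℝ (Fin d), ‖T v‖ ≤ ‖v‖ := by
    intro v
    calc ‖T v‖ ≤ ‖X‖ * ‖v‖ := Matrix.l2_opNorm_mulVec X v
    _ ≤ 1 * ‖v‖ := by gcongr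
    _ = ‖v‖ := one_mul _
  have hin : ∀ a b : EuclideanSpace ℝ (Fin d), |⟪a, T b⟫| ≤ ‖a‖ * ‖b‖ := by
    intro a b
    calc |⟪a, T b⟫| ≤ ‖a‖ * ‖T b‖ := abs_real_inner_le_norm a (T b)
    _ ≤ ‖a‖ * ‖b‖ := by gcongr; exact hbound b
  -- rewrite the goal
  have hgoal : ⟪y, Matrix.toEuclideanLin
        (X + (3 * ε / d) • (1 : Matrix (Fin d) (Fin d) ℝ)) y⟫
      = ⟪y, T y⟫ + 3 * ε / d := by
    rw [map_add, map_smul]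
    have h1 : Matrix.toEuclideanLin (1 : Matrix (Fin d) (Fin d) ℝ) y = y := by
      apply (WithLp.equiv 2 _).injective
      simp [Matrix.piLp_ofLp_toEuclideanLin]
    simp only [LinearMap.add_apply, LinearMap.smul_apply, h1, inner_add_right,
      real_inner_smul_right]
    rw [real_inner_self_eq_norm_sq, hy]
    ring
  rw [hgoal]
  have hexp : ⟪y + e, T (y + e)⟫ = ⟪y, T y⟫ + ⟪y, T e⟫ + ⟪e, T y⟫ + ⟪e, T e⟫ := by
    rw [map_add]
    simp only [inner_add_left, inner_add_right]
    ring
  have h1 : |⟪y, T e⟫| ≤ ε / d := by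
    have := hin y e
    rw [hy, one_mul] at this
    exact this.trans he
  have h2 : |⟪e, T y⟫| ≤ ε / d := by
    have := hin e y
    rw [hy, mul_one] at this
    exact this.trans he
  have h3 : |⟪e, T e⟫| ≤ ε / d := by
    have := hin e e
    have h' : ‖e‖ * ‖e‖ ≤ (ε / d) * 1 := by
      have := he
      nlinarith [norm_nonneg e]
    rw [mul_one] at h'
    exact this.trans h'
  have : -(3 * ε / d) ≤ ⟪y, T y⟫ := by
    have hl := hlattice
    rw [hexp] at hl
    have a1 := abs_le.mp h1
    have a2 := abs_le.mp h2
    have a3 := abs_le.mp h3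
    have h33 : 3 * ε / (d:ℝ) = 3 * (ε / d) := by ring
    linarith [a1.2, a2.2, a3.2]
  linarith
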